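/- Let H be a real n×n matrix with HᵀH = I, let μ ≥ 0 and x, y ∈ ℝⁿ. Then ‖N_μ(x) − y‖² ≤ ‖x − y‖² − 2μ(‖H N_μ(x)‖₁ − ‖Hy‖₁) + 3μ²n. -/

import Mathlib

open Filter Topology Matrix

/-- The soft-thresholding operator with threshold `μ`. -/
noncomputable def softThresh {n : ℕ} (μ : ℝ) (v : EuclideanSpace ℝ (Fin n)) :
    EuclideanSpace ℝ (Fin n) :=
  WithLp.toLp 2 (fun i => if v i < -μ then v i + μ else if μ < v i then v i - μ else 0)

/-- Multiplication of a Euclidean vector by a matrix. -/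
noncomputable def matVec {n : ℕ} (H : Matrix (Fin n) (Fin n) ℝ)
    (x : EuclideanSpace ℝ (Fin n)) : EuclideanSpace ℝ (Fin n) :=
  (WithLp.equiv 2 (Fin n → ℝ)).symm (H.mulVec ((WithLp.equiv 2 (Fin n → ℝ)) x))

/-- The transformed soft-thresholding operator `N_μ(x) = Hᵀ ST_μ (H x)`. -/
noncomputable def haarProx {n : ℕ} (H : Matrix (Fin n) (Fin n) ℝ) (μ : ℝ)
    (x : EuclideanSpace ℝ (Fin n)) : EuclideanSpace ℝ (Fin n) :=
  matVec Hᵀ (softThresh μ (matVec H x))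

/-- The 1-norm of a vector. -/
noncomputable def norm1 {n : ℕ} (u : EuclideanSpace ℝ (Fin n)) : ℝ :=
  ∑ i, |u i|

lemma matVec_matVec {n : ℕ} (A B : Matrix (Fin n) (Fin n) ℝ)
    (x : EuclideanSpace ℝ (Fin n)) : matVec A (matVec B x) = matVec (A * B) x := by
  simp [matVec, Matrix.mulVec_mulVec]

lemma matVec_one {n : ℕ} (x : EuclideanSpace ℝ (Fin n)) : matVec 1 x = x := by
  simp [matVec]

lemma matVec_sub {n : ℕ} (A : Matrix (Fin n) (Fin n) ℝ)
    (x y : EuclideanSpace ℝ (Fin n)) :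
    matVec A (x - y) = matVec A x - matVec A y := by
  ext i
  simp [matVec, Matrix.mulVec_sub]

lemma norm_sq_eq {n : ℕ} (v : EuclideanSpace ℝ (Fin n)) : ‖v‖ ^ 2 = ∑ i, (v i) ^ 2 := by
  rw [EuclideanSpace.norm_eq, Real.sq_sqrt (by positivity)]
  simp [sq_abs]

lemma norm_matVec {n : ℕ} (A : Matrix (Fin n) (Fin n) ℝ) (hA : Aᵀ * A = 1)
    (v : EuclideanSpace ℝ (Fin n)) : ‖matVec A v‖ = ‖v‖ := by
  have h : ‖matVec A v‖ ^ 2 = ‖v‖ ^ 2 := by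
    rw [norm_sq_eq, norm_sq_eq]
    set v' := (WithLp.equiv 2 (Fin n → ℝ)) v with hv'
    have : ∑ i, (matVec A v i) ^ 2 = (A.mulVec v') ⬝ᵥ (A.mulVec v') := by
      simp [matVec, dotProduct, sq]
      rfl
    rw [this, Matrix.dotProduct_mulVec, ← Matrix.mulVec_transpose,
      Matrix.mulVec_mulVec, hA, Matrix.one_mulVec]
    simp only [dotProduct]
    apply Finset.sum_congr rfl
    intro i _
    rw [sq]
    rfl
  have h1 : (0:ℝ) ≤ ‖matVec A v‖ := norm_nonneg _
  have h2 : (0:ℝ) ≤ ‖v‖ := norm_nonneg _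
  nlinarith

lemma st_scalar (μ u z : ℝ) (hμ : 0 ≤ μ) :
    ((if u < -μ then u + μ else if μ < u then u - μ else 0) - z) ^ 2
      ≤ (u - z) ^ 2
        - 2 * μ * (|if u < -μ then u + μ else if μ < u then u - μ else 0| - |z|)
        + 3 * μ ^ 2 := by
  have hz1 := neg_abs_le z
  have hz2 := le_abs_self z
  split_ifs with h1 h2
  · rw [abs_of_nonpos (by linarith)]
    nlinarith
  · rw [abs_of_nonneg (by linarith)]
    nlinarith
  · rw [abs_zero]
    have hu1 : -μ ≤ u := by linarith [not_lt.mp h1]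
    have hu2 : u ≤ μ := not_lt.mp h2
    nlinarith

/-- The optimality-operator inequality for the transformed soft-thresholding
operator `N_μ`. -/
theorem haar_soft_threshold_descent {n : ℕ}
    (H : Matrix (Fin n) (Fin n) ℝ) (hH : Hᵀ * H = 1)
    (μ : ℝ) (hμ : 0 ≤ μ) (x y : EuclideanSpace ℝ (Fin n)) :
    ‖haarProx H μ x - y‖ ^ 2
      ≤ ‖x - y‖ ^ 2
        - 2 * μ * (norm1 (matVec H (haarProx H μ x)) - norm1 (matVec H y))
        + 3 * μ ^ 2 * (n : ℝ) := by
  have hH' : H * Hᵀ = 1 := mul_eq_one_comm.mp hH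
  set u := matVec H x with hu
  set w := softThresh μ u with hw
  set z := matVec H y with hz
  -- H (haarProx) = w
  have key1 : matVec H (haarProx H μ x) = w := by
    rw [haarProx, matVec_matVec, hH', matVec_one]
  -- ‖haarProx - y‖ = ‖w - z‖
  have key2 : ‖haarProx H μ x - y‖ = ‖w - z‖ := by
    have : haarProx H μ x - y = matVec Hᵀ (w - z) := by
      rw [matVec_sub, haarProx, hz, matVec_matVec, hH, matVec_one]
    rw [this, norm_matVec Hᵀ (by rwa [Matrix.transpose_transpose])]
  have key3 : ‖x - y‖ = ‖u - z‖ := by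
    rw [← norm_matVec H hH (x - y), matVec_sub]
  rw [key1, key2, key3, norm_sq_eq, norm_sq_eq, norm1, norm1]
  have sumbound : ∑ i, ((w - z) i) ^ 2
      ≤ ∑ i, (((u - z) i) ^ 2 - 2 * μ * (|w i| - |z i|) + 3 * μ ^ 2) := by
    apply Finset.sum_le_sum
    intro i _
    have hwz : (w - z) i = w i - z i := by simp
    have huz : (u - z) i = u i - z i := by simp
    rw [hwz, huz]
    have : w i = if u i < -μ then u i + μ else if μ < u i then u i - μ else 0 := rfl
    rw [this]
    exact st_scalar μ (u i) (z i) hμ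
  calc ∑ i, ((w - z) i) ^ 2
      ≤ ∑ i, (((u - z) i) ^ 2 - 2 * μ * (|w i| - |z i|) + 3 * μ ^ 2) := sumbound
    _ = ∑ i, ((u - z) i) ^ 2 - 2 * μ * (∑ i, |w i| - ∑ i, |z i|) + 3 * μ ^ 2 * n := by
        rw [Finset.sum_add_distrib, Finset.sum_sub_distrib, ← Finset.mul_sum,
          Finset.sum_sub_distrib]
        simp [mul_sub, Finset.card_univ]
        ring
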